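/- arXiv:2407.10428 — 2 statements merged into one kernel-verified Lean document; each statement's English description precedes it below -/
import Mathlib

section
/- The generating function of pend(n), the number of partitions of n in which even parts are not distinct (i.e., every even part, if it occurs, occurs at least twice), is given by ∑_{n≥0} pend(n) q^n = (q^2;q^2)_∞ (q^12;q^12)_∞ / ((q;q)_∞ (q^4;q^4)_∞ (q^6;q^6)_∞). -/
open scoped Classical

/-- `fps k` is the infinite product `(q^k; q^k)_∞ = ∏_{n≥1} (1 - q^{kn})`,
defined coefficient-wise via truncated products (factors beyond `n` do not
affect the coefficient of `q^n` when `k ≥ 1`). -/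
noncomputable def fps (k : ℕ) : PowerSeries ℤ :=
  PowerSeries.mk fun n =>
    PowerSeries.coeff (R := ℤ) n
      (∏ i ∈ Finset.range (n + 1), (1 - (PowerSeries.X : PowerSeries ℤ) ^ (k * (i + 1))))

/-- `pend n` is the number of partitions of `n` in which every even part
occurs with multiplicity at least `2`. -/
noncomputable def pend (n : ℕ) : ℕ :=
  (Finset.univ.filter fun P : n.Partition =>
    ∀ i ∈ P.parts, Even i → 2 ≤ P.parts.count i).card

namespace PendGF

noncomputable section

open Finset PowerSeries

/-- A convenience constructor for the power series whose coefficients indicate a subset. -/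
def indicatorSeries (α : Type*) [Semiring α] (s : Set ℕ) : PowerSeries α :=
  PowerSeries.mk fun n => if n ∈ s then 1 else 0

theorem coeff_indicator {α : Type*} (s : Set ℕ) [Semiring α] (n : ℕ) :
    coeff (R := α) n (indicatorSeries _ s) = if n ∈ s then 1 else 0 :=
  coeff_mk _ _

-- The main workhorse (copied from Archive/Wiedijk100Theorems/Partition.lean).
theorem partialGF_prop (α : Type*) [CommSemiring α] (n : ℕ) (s : Finset ℕ) (hs : ∀ i ∈ s, 0 < i)
    (c : ℕ → Set ℕ) (hc : ∀ i, i ∉ s → 0 ∈ c i) :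
    #{p : n.Partition | (∀ j, p.parts.count j ∈ c j) ∧ ∀ j ∈ p.parts, j ∈ s} =
      coeff (R := α) n (∏ i ∈ s, indicatorSeries α ((· * i) '' c i)) := by
  simp_rw [coeff_prod, coeff_indicator, prod_boole, sum_boole]
  apply congr_arg
  simp only [mem_univ, forall_true_left, not_and, not_forall, exists_prop,
    Set.mem_image, not_exists]
  set φ : (a : Nat.Partition n) →
    a ∈ filter (fun p ↦ (∀ (j : ℕ), Multiset.count j p.parts ∈ c j) ∧ ∀ j ∈ p.parts, j ∈ s) univ →
    ℕ →₀ ℕ := fun p _ => {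
      toFun := fun i => Multiset.count i p.parts • i
      support := Finset.filter (fun i => i ≠ 0) p.parts.toFinset
      mem_support_toFun := fun a => by
        simp only [smul_eq_mul, ne_eq, mul_eq_zero, Multiset.count_eq_zero]
        rw [not_or, not_not]
        simp only [Multiset.mem_toFinset, not_not, mem_filter] }
  refine Finset.card_bij φ ?_ ?_ ?_
  · intro a ha
    simp only [φ, not_forall, not_exists, not_and, exists_prop, mem_filter]
    rw [mem_finsuppAntidiag]
    dsimp only [ne_eq, smul_eq_mul, id_eq, eq_mpr_eq_cast, le_eq_subset, Finsupp.coe_mk]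
    simp only [mem_univ, forall_true_left, not_and, not_forall, exists_prop,
      mem_filter, true_and] at ha
    refine ⟨⟨?_, fun i ↦ ?_⟩, fun i _ ↦ ⟨a.parts.count i, ha.1 i, rfl⟩⟩
    · conv_rhs => simp [← a.parts_sum]
      rw [sum_multiset_count_of_subset _ s]
      · simp only [smul_eq_mul]
      · intro i
        simp only [Multiset.mem_toFinset, not_not, mem_filter]
        apply ha.2
    · simp only [ne_eq, Multiset.mem_toFinset, not_not, mem_filter, and_imp]
      exact fun hi _ ↦ ha.2 i hi
  · intro p₁ hp₁ p₂ hp₂ h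
    apply Nat.Partition.ext
    simp only [true_and, mem_univ, mem_filter] at hp₁ hp₂
    ext i
    simp only [φ, ne_eq, Multiset.mem_toFinset, not_not, smul_eq_mul, Finsupp.mk.injEq] at h
    by_cases hi : i = 0
    · rw [hi]
      rw [Multiset.count_eq_zero_of_notMem]
      · rw [Multiset.count_eq_zero_of_notMem]
        intro a; exact Nat.lt_irrefl 0 (hs 0 (hp₂.2 0 a))
      intro a; exact Nat.lt_irrefl 0 (hs 0 (hp₁.2 0 a))
    · rw [← mul_left_inj' hi]
      rw [funext_iff] at h
      exact h.2 i
  · simp only [φ, mem_filter, mem_finsuppAntidiag, mem_univ, exists_prop, true_and, and_assoc]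
    rintro f ⟨hf, hf₃, hf₄⟩
    have hf' : f ∈ finsuppAntidiag s n := mem_finsuppAntidiag.mpr ⟨hf, hf₃⟩
    simp only [mem_finsuppAntidiag] at hf'
    refine ⟨⟨∑ i ∈ s, Multiset.replicate (f i / i) i, ?_, ?_⟩, ?_, ?_, ?_⟩
    · intro i hi
      simp only [exists_prop, Multiset.mem_sum, mem_map, Function.Embedding.coeFn_mk] at hi
      rcases hi with ⟨t, ht, z⟩
      apply hs
      rwa [Multiset.eq_of_mem_replicate z]
    · simp_rw [Multiset.sum_sum, Multiset.sum_replicate, Nat.nsmul_eq_mul]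
      rw [← hf'.1]
      refine sum_congr rfl fun i hi => Nat.div_mul_cancel ?_
      rcases hf₄ i hi with ⟨w, _, hw₂⟩
      rw [← hw₂]
      exact dvd_mul_left _ _
    · intro i
      simp_rw [Multiset.count_sum', Multiset.count_replicate, sum_ite_eq']
      split_ifs with h
      · rcases hf₄ i h with ⟨w, hw₁, hw₂⟩
        rwa [← hw₂, Nat.mul_div_cancel _ (hs i h)]
      · exact hc _ h
    · intro i hi
      rw [Multiset.mem_sum] at hi
      rcases hi with ⟨j, hj₁, hj₂⟩
      rwa [Multiset.eq_of_mem_replicate hj₂]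
    · ext i
      simp_rw [Multiset.count_sum', Multiset.count_replicate, sum_ite_eq']
      simp only [ne_eq, Multiset.mem_toFinset, not_not, smul_eq_mul, ite_mul,
        zero_mul, Finsupp.coe_mk]
      split_ifs with h
      · apply Nat.div_mul_cancel
        rcases hf₄ i h with ⟨w, _, hw₂⟩
        apply Dvd.intro_left _ hw₂
      · apply symm
        rw [← Finsupp.notMem_support_iff]
        exact notMem_mono hf'.2 h

/-- The geometric series `∑_{i ∣ n} q^n = 1/(1-q^i)`. -/
def geom (i : ℕ) : PowerSeries ℤ := indicatorSeries ℤ {k | i ∣ k}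

theorem geom_mul (i : ℕ) (hi : 0 < i) : geom i * (1 - X ^ i) = 1 := by
  ext n
  rw [mul_sub, mul_one, map_sub, coeff_mul_X_pow']
  simp only [geom, coeff_indicator, coeff_one, Set.mem_setOf_eq]
  rcases Nat.eq_zero_or_pos n with rfl | hn
  · rw [if_pos (dvd_zero i), if_neg (by omega), if_pos rfl, sub_zero]
  · rw [if_neg (by omega : ¬n = 0)]
    by_cases h : i ≤ n
    · rw [if_pos h]
      have hiff : i ∣ n ↔ i ∣ n - i := by
        constructor
        · intro hd; exact Nat.dvd_sub hd dvd_rfl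
        · intro hd
          have : n - i + i = n := Nat.sub_add_cancel h
          rw [← this]; exact Nat.dvd_add hd dvd_rfl
      by_cases hd : i ∣ n
      · rw [if_pos hd, if_pos (hiff.mp hd), sub_self]
      · rw [if_neg hd, if_neg (fun hc => hd (hiff.mpr hc)), sub_zero]
    · rw [if_neg h, if_neg (fun hd => h (Nat.le_of_dvd hn hd)), sub_zero]

/-- The factor assigned to part `i` in the generating function for `pend`. -/
def Iser (i : ℕ) : PowerSeries ℤ := if Even i then geom i - X ^ i else geom i

theorem Iser_odd_mul (i : ℕ) (hi : 0 < i) (h : ¬Even i) : Iser i * (1 - X ^ i) = 1 := by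
  rw [Iser, if_neg h]; exact geom_mul i hi

theorem Iser_even_mul (i : ℕ) (hi : 0 < i) :
    Iser (2 * i) * (1 - X ^ (4 * i)) = 1 + X ^ (6 * i) := by
  rw [Iser, if_pos ⟨i, by ring⟩]
  have h1 : geom (2 * i) * (1 - X ^ (2 * i)) = 1 := geom_mul _ (by omega)
  linear_combination (1 + (X : PowerSeries ℤ) ^ (2 * i)) * h1

/-- Truncated product `∏_{j=1}^{m} (1 - X^{kj})`. -/
def Pp (k m : ℕ) : PowerSeries ℤ :=
  ∏ i ∈ Finset.range m, (1 - (X : PowerSeries ℤ) ^ (k * (i + 1)))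

theorem coeff_mul_one_sub_pow (n d : ℕ) (h : n < d) (f : PowerSeries ℤ) :
    coeff (R := ℤ) n (f * (1 - X ^ d)) = coeff (R := ℤ) n f := by
  rw [mul_sub, mul_one, map_sub, coeff_mul_X_pow', if_neg (by omega), sub_zero]

theorem coeff_Pp_stable (k : ℕ) (hk : 0 < k) (n : ℕ) {m m' : ℕ} (hm : n < m) (h : m ≤ m') :
    coeff (R := ℤ) n (Pp k m') = coeff (R := ℤ) n (Pp k m) := by
  induction m', h using Nat.le_induction with
  | base => rfl
  | succ m' hm' ih =>
    rw [Pp, Finset.prod_range_succ, ← Pp]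
    rw [coeff_mul_one_sub_pow]
    · exact ih
    · have := Nat.le_mul_of_pos_left (m' + 1) hk
      omega

theorem coeff_fps_eq (k : ℕ) (hk : 0 < k) (n L : ℕ) (hL : n < L) :
    ∀ m ≤ n, coeff (R := ℤ) m (fps k) = coeff (R := ℤ) m (Pp k L) := by
  intro m hm
  rw [fps, coeff_mk]
  exact (coeff_Pp_stable k hk m (Nat.lt_succ_self m) (by omega)).symm

theorem coeff_mul_congr {n : ℕ} {f f' g g' : PowerSeries ℤ}
    (hf : ∀ m ≤ n, coeff (R := ℤ) m f = coeff (R := ℤ) m f') (hg : ∀ m ≤ n, coeff (R := ℤ) m g = coeff (R := ℤ) m g') :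
    ∀ m ≤ n, coeff (R := ℤ) m (f * g) = coeff (R := ℤ) m (f' * g') := by
  intro m hm
  rw [coeff_mul, coeff_mul]
  refine Finset.sum_congr rfl fun p hp => ?_
  rw [Finset.HasAntidiagonal.mem_antidiagonal] at hp
  rw [hf p.1 (by omega), hg p.2 (by omega)]

/-- The key formal product identity. -/
theorem main_prod (M : ℕ) :
    (∏ a ∈ Finset.range (2 * M), Iser (a + 1)) * Pp 1 (2 * M) * Pp 4 M * Pp 6 M
      = Pp 2 M * Pp 12 M := by
  induction M with
  | zero => simp [Pp]
  | succ M ih =>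
    have e2 : 2 * (M + 1) = 2 * M + 1 + 1 := by ring
    unfold Pp at ih ⊢
    rw [e2]
    simp only [Finset.prod_range_succ]
    have h1 : Iser (2 * M + 1) * (1 - X ^ (2 * M + 1)) = 1 :=
      Iser_odd_mul _ (by omega) (by simp [Nat.even_add_one, parity_simps])
    have h2 : Iser (2 * (M + 1)) * (1 - X ^ (4 * (M + 1))) = 1 + X ^ (6 * (M + 1)) :=
      Iser_even_mul (M + 1) (by omega)
    have h2' : Iser (2 * M + 1 + 1) * (1 - X ^ (4 * (M + 1))) = 1 + X ^ (6 * (M + 1)) := by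
      rw [show 2 * M + 1 + 1 = 2 * (M + 1) by ring]; exact h2
    set Q := ∏ a ∈ Finset.range (2 * M), Iser (a + 1) with hQ
    set A := Iser (2 * M + 1)
    set B := Iser (2 * M + 1 + 1)
    set P1 := ∏ i ∈ Finset.range (2 * M), (1 - (X : PowerSeries ℤ) ^ (1 * (i + 1)))
    set P4 := ∏ i ∈ Finset.range M, (1 - (X : PowerSeries ℤ) ^ (4 * (i + 1)))
    set P6 := ∏ i ∈ Finset.range M, (1 - (X : PowerSeries ℤ) ^ (6 * (i + 1)))
    set P2 := ∏ i ∈ Finset.range M, (1 - (X : PowerSeries ℤ) ^ (2 * (i + 1)))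
    set P12 := ∏ i ∈ Finset.range M, (1 - (X : PowerSeries ℤ) ^ (12 * (i + 1)))
    have h3 : (1 + (X : PowerSeries ℤ) ^ (6 * (M + 1))) * (1 - X ^ (6 * (M + 1)))
        = 1 - X ^ (12 * (M + 1)) := by ring
    linear_combination
      ((1 - (X : PowerSeries ℤ) ^ (2 * (M + 1))) * (1 - X ^ (12 * (M + 1)))) * ih
      + (Q * P1 * P4 * P6) *
        ((B * (1 - (X : PowerSeries ℤ) ^ (1 * (2 * M + 1 + 1))) * (1 - X ^ (4 * (M + 1)))
            * (1 - X ^ (6 * (M + 1)))) * h1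
        + ((1 - (X : PowerSeries ℤ) ^ (1 * (2 * M + 1 + 1))) * (1 - X ^ (6 * (M + 1)))) * h2'
        + (1 - (X : PowerSeries ℤ) ^ (1 * (2 * M + 1 + 1))) * h3)

theorem ind_eq (i : ℕ) (hi : 0 < i) :
    indicatorSeries ℤ ((· * i) '' (if Even i then {c : ℕ | c ≠ 1} else Set.univ)) = Iser i := by
  by_cases h : Even i
  · rw [if_pos h, Iser, if_pos h]
    have himg : ∀ n, n ∈ (· * i) '' {c : ℕ | c ≠ 1} ↔ i ∣ n ∧ n ≠ i := by
      intro n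
      constructor
      · rintro ⟨c, hc, rfl⟩
        refine ⟨dvd_mul_left i c, fun he => hc ?_⟩
        have he' : c * i = i := he
        exact Nat.eq_of_mul_eq_mul_right hi (by rw [he', one_mul])
      · rintro ⟨⟨c, rfl⟩, hne⟩
        exact ⟨c, fun h1 => hne (by rw [h1, mul_one]), mul_comm c i⟩
    ext n
    rw [coeff_indicator, map_sub, geom, coeff_indicator, coeff_X_pow]
    simp only [Set.mem_setOf_eq]
    by_cases hd : i ∣ n
    · by_cases hn : n = i
      · rw [if_neg (fun hc => ((himg n).mp hc).2 hn), if_pos hd, if_pos hn, sub_self]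
      · rw [if_pos ((himg n).mpr ⟨hd, hn⟩), if_pos hd, if_neg hn, sub_zero]
    · have hn : n ≠ i := fun he => hd (he ▸ dvd_refl i)
      rw [if_neg (fun hc => hd ((himg n).mp hc).1), if_neg hd, if_neg hn, sub_zero]
  · rw [if_neg h, Iser, if_neg h, geom]
    have hset : ((· * i) '' (Set.univ : Set ℕ)) = {k | i ∣ k} := by
      ext n
      constructor
      · rintro ⟨c, -, rfl⟩; exact dvd_mul_left i c
      · rintro ⟨c, rfl⟩; exact ⟨c, Set.mem_univ c, mul_comm c i⟩
    rw [hset]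

theorem pend_eq (m N : ℕ) (hm : m < N) :
    (pend m : ℤ) = coeff (R := ℤ) m (∏ a ∈ Finset.range N, Iser (a + 1)) := by
  set c : ℕ → Set ℕ := fun j => if Even j then {c : ℕ | c ≠ 1} else Set.univ with hc
  set s : Finset ℕ := (Finset.range N).map ⟨Nat.succ, Nat.succ_injective⟩ with hs
  have hs0 : ∀ i ∈ s, 0 < i := by
    intro i hi
    simp only [hs, Finset.mem_map, Function.Embedding.coeFn_mk] at hi
    obtain ⟨a, -, rfl⟩ := hi
    exact Nat.succ_pos a
  have hc0 : ∀ i, i ∉ s → 0 ∈ c i := by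
    intro i _
    simp only [hc]
    split
    · simp
    · trivial
  have hprop := partialGF_prop ℤ m s hs0 c hc0
  have hfilter : (Finset.univ.filter fun P : m.Partition =>
      ∀ i ∈ P.parts, Even i → 2 ≤ P.parts.count i) =
      (Finset.univ.filter fun p : m.Partition =>
        (∀ j, p.parts.count j ∈ c j) ∧ ∀ j ∈ p.parts, j ∈ s) := by
    apply Finset.filter_congr
    intro p _
    constructor
    · intro hP
      constructor
      · intro j
        simp only [hc]
        split
        · intro hj1
          have hjmem : j ∈ p.parts := Multiset.count_pos.mp (by omega)
          have := hP j hjmem ‹Even j›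
          omega
        · trivial
      · intro j hj
        have hj1 : 0 < j := p.parts_pos hj
        have hjle : j ≤ m := by
          have := Multiset.single_le_sum (fun _ _ => Nat.zero_le _) _ hj
          simpa [p.parts_sum] using this
        simp only [hs, Finset.mem_map, Function.Embedding.coeFn_mk]
        exact ⟨j - 1, Finset.mem_range.mpr (by omega), by omega⟩
    · rintro ⟨h1, _⟩ i hi hEven
      have := h1 i
      simp only [hc, if_pos hEven, Set.mem_setOf_eq] at this
      have hpos : 0 < p.parts.count i := Multiset.count_pos.mpr hi
      omega
  have hprod : (∏ i ∈ s, indicatorSeries ℤ ((· * i) '' c i))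
      = ∏ a ∈ Finset.range N, Iser (a + 1) := by
    rw [hs, Finset.prod_map]
    refine Finset.prod_congr rfl fun a _ => ?_
    simp only [hc]
    exact ind_eq (a + 1) (Nat.succ_pos a)
  rw [pend, hfilter]
  rw [← hprod]
  exact_mod_cast hprop

end

end PendGF

/-- Generating function: `∑ pend(n) q^n = f₂ f₁₂ / (f₁ f₄ f₆)`. -/
theorem pend_gf :
    (PowerSeries.mk fun n => (pend n : ℤ)) * fps 1 * fps 4 * fps 6 = fps 2 * fps 12 := by
  ext n
  open PendGF in
  have E1 : ∀ m ≤ n, PowerSeries.coeff (R := ℤ) m (PowerSeries.mk fun n => (pend n : ℤ))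
      = PowerSeries.coeff (R := ℤ) m (∏ a ∈ Finset.range (2 * (n + 1)), Iser (a + 1)) := by
    intro m hm
    rw [PowerSeries.coeff_mk]
    exact pend_eq m (2 * (n + 1)) (by omega)
  have E1' := PendGF.coeff_fps_eq 1 one_pos n (2 * (n + 1)) (by omega)
  have E4 := PendGF.coeff_fps_eq 4 (by norm_num) n (n + 1) (by omega)
  have E6 := PendGF.coeff_fps_eq 6 (by norm_num) n (n + 1) (by omega)
  have E2 := PendGF.coeff_fps_eq 2 (by norm_num) n (n + 1) (by omega)
  have E12 := PendGF.coeff_fps_eq 12 (by norm_num) n (n + 1) (by omega)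
  have L := PendGF.coeff_mul_congr (PendGF.coeff_mul_congr (PendGF.coeff_mul_congr E1 E1') E4) E6
    n le_rfl
  have R := PendGF.coeff_mul_congr E2 E12 n le_rfl
  rw [L, R, PendGF.main_prod (n + 1)]
end

section
/- Jacobi's triple product identity: for Ramanujan's theta function f(a,b) := ∑_{n∈ℤ} a^{n(n+1)/2} b^{n(n-1)/2}, one has f(a,b) = (-a; ab)_∞ (-b; ab)_∞ (ab; ab)_∞. -/
open scoped Classical

open Polynomial Finset

noncomputable section JTP

def jgb : ℕ → ℕ → Polynomial ℤ
  | 0, 0 => 1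
  | 0, _+1 => 0
  | _+1, 0 => 1
  | n+1, k+1 => jgb n k + Polynomial.X ^ (k+1) * jgb n (k+1)

@[simp] lemma jgb_zero (n : ℕ) : jgb n 0 = 1 := by cases n <;> rfl

lemma jgb_succ_succ (n k : ℕ) :
    jgb (n+1) (k+1) = jgb n k + Polynomial.X ^ (k+1) * jgb n (k+1) := rfl

lemma jgb_eq_zero : ∀ n k : ℕ, n < k → jgb n k = 0 := by
  intro n
  induction n with
  | zero => intro k h; match k, h with
            | k+1, _ => rfl
  | succ n ih =>
    intro k h
    match k, h with
    | k+1, h =>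
      rw [jgb_succ_succ, ih k (by omega), ih (k+1) (by omega)]; ring

lemma jgb_self : ∀ n : ℕ, jgb n n = 1 := by
  intro n
  induction n with
  | zero => rfl
  | succ n ih => rw [jgb_succ_succ, ih, jgb_eq_zero n (n+1) (by omega)]; ring

lemma jgb_one : ∀ n : ℕ, jgb n 1 = ∑ i ∈ range n, Polynomial.X ^ i := by
  intro n
  induction n with
  | zero => simp [jgb]
  | succ n ih =>
    rw [show (1:ℕ) = 0 + 1 from rfl, jgb_succ_succ, jgb_zero, ih,
      Finset.sum_range_succ' (fun i => (Polynomial.X:Polynomial ℤ) ^ i)]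
    rw [Finset.mul_sum]
    simp only [pow_succ, mul_comm, mul_one, one_mul, pow_zero]
    rw [add_comm]

lemma jgb_top : ∀ n : ℕ, jgb (n+1) n = ∑ i ∈ range (n+1), Polynomial.X ^ i := by
  intro n
  induction n with
  | zero => simp
  | succ n ih =>
    rw [jgb_succ_succ, ih, jgb_self, Finset.sum_range_succ (fun i => (Polynomial.X:Polynomial ℤ) ^ i) (n+1),
      Finset.sum_range_succ (fun i => (Polynomial.X:Polynomial ℤ) ^ i) n]
    ring

/-- `(q;q)_k` as a polynomial. -/
def jeN (k : ℕ) : Polynomial ℤ := ∏ j ∈ range k, (1 - Polynomial.X ^ (j+1))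

@[simp] lemma jeN_zero : jeN 0 = 1 := by simp [jeN]

lemma jeN_succ (k : ℕ) : jeN (k+1) = jeN k * (1 - Polynomial.X ^ (k+1)) := by
  simp [jeN, Finset.prod_range_succ]

lemma jeN_ne_zero (k : ℕ) : jeN k ≠ 0 := by
  intro h
  have : (jeN k).eval 0 = 1 := by
    simp [jeN, Polynomial.eval_prod]
  rw [h] at this; simp at this

/-- Product formula for Gaussian binomials. -/
lemma jgb_mul : ∀ n a b : ℕ, a + b = n → jgb n a * jeN a * jeN b = jeN n := by
  intro n
  induction n with
  | zero => intro a b h; obtain ⟨rfl, rfl⟩ : a = 0 ∧ b = 0 := by omega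
            simp
  | succ n ih =>
    intro a b h
    match a with
    | 0 => obtain rfl : b = n+1 := by omega
           simp
    | a'+1 =>
      rw [jgb_succ_succ, jeN_succ]
      match b, h with
      | 0, h =>
        have ha : a' = n := by omega
        subst ha
        rw [jgb_self, jgb_eq_zero a' (a'+1) (by omega), jeN_succ a', jeN_zero]
        ring
      | b'+1, h =>
        have h1 := ih a' (b'+1) (by omega)
        have h2 := ih (a'+1) b' (by omega)
        rw [jeN_succ n]
        have e1 : (a'+1) + (b'+1) = n + 1 := h
        have hx : (Polynomial.X:Polynomial ℤ)^(a'+1) * Polynomial.X ^ (b'+1) = Polynomial.X ^ (n+1) := by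
          rw [← pow_add, e1]
        calc (jgb n a' + Polynomial.X ^ (a'+1) * jgb n (a'+1)) * (jeN a' * (1 - Polynomial.X ^ (a'+1))) * jeN (b'+1)
            = (jgb n a' * jeN a' * jeN (b'+1)) * (1 - Polynomial.X ^ (a'+1))
              + Polynomial.X ^ (a'+1) * ((jgb n (a'+1) * (jeN a' * (1 - Polynomial.X ^ (a'+1))) * jeN b') * (1 - Polynomial.X ^ (b'+1))) := by
              rw [jeN_succ b']; ring
          _ = jeN n * (1 - Polynomial.X ^ (a'+1)) + Polynomial.X ^ (a'+1) * (jeN n * (1 - Polynomial.X ^ (b'+1))) := by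
              rw [← jeN_succ a', h1, h2]
          _ = jeN n * (1 - Polynomial.X ^ (n+1)) := by
              rw [← hx]; ring
  

lemma jgb_step (a b : ℕ) :
    jgb (a+b+4) (a+2)
      = jgb (a+b+2) (a+1) * (1 + Polynomial.X ^ (a+b+3))
        + Polynomial.X ^ (a+2) * jgb (a+b+2) (a+2)
        + Polynomial.X ^ (b+2) * jgb (a+b+2) a := by
  have hc : jeN (a+2) * jeN (b+2) ≠ 0 := mul_ne_zero (jeN_ne_zero _) (jeN_ne_zero _)
  apply mul_right_cancel₀ hc
  have h0 := jgb_mul (a+b+4) (a+2) (b+2) (by omega)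
  have h1 := jgb_mul (a+b+2) (a+1) (b+1) (by omega)
  have h2 := jgb_mul (a+b+2) (a+2) b (by omega)
  have h3 := jgb_mul (a+b+2) a (b+2) (by omega)
  simp only [jeN_succ] at h0 h1 h2 h3 ⊢
  linear_combination h0
    - ((1+Polynomial.X^(a+b+3))*(1-Polynomial.X^(a+2))*(1-Polynomial.X^(b+2)))*h1
    - (Polynomial.X^(a+2)*(1-Polynomial.X^(b+1))*(1-Polynomial.X^(b+2)))*h2
    - (Polynomial.X^(b+2)*(1-Polynomial.X^(a+1))*(1-Polynomial.X^(a+2)))*h3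

lemma jeN_factor {i j : ℕ} (h : i ≤ j) :
    ∃ u, jeN j = jeN i * u ∧ (Polynomial.X:Polynomial ℤ)^(i+1) ∣ (u - 1) := by
  induction j with
  | zero => exact ⟨1, by simp [show i = 0 by omega], by simp⟩
  | succ j ih =>
    rcases Nat.lt_or_ge i (j+1) with hij | hij
    · obtain ⟨u, hu, hd⟩ := ih (by omega)
      refine ⟨u * (1 - Polynomial.X^(j+1)), by rw [jeN_succ, hu]; ring, ?_⟩
      have he : u * (1 - Polynomial.X^(j+1)) - 1
          = (u - 1) * (1 - Polynomial.X^(j+1)) - Polynomial.X^(j+1) := by ring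
      rw [he]
      exact dvd_sub (Dvd.dvd.mul_right hd _) (pow_dvd_pow _ (by omega))
    · exact ⟨1, by simp [show i = j+1 by omega], by simp⟩

lemma jgb_eN_one (N p c : ℕ) (hpc : p + c = 2*N) :
    ∃ s, jgb (2*N) p * jeN N = 1 + Polynomial.X ^ (min p c + 1) * s := by
  have hprod := jgb_mul (2*N) p c hpc
  rcases le_total p c with h | h
  · obtain ⟨u1, hu1, hd1⟩ := jeN_factor (show c ≤ 2*N by omega)
    obtain ⟨u2, hu2, hd2⟩ := jeN_factor (show p ≤ N by omega)
    have hcan : jgb (2*N) p * jeN p = u1 :=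
      mul_right_cancel₀ (jeN_ne_zero c) (by rw [hprod, hu1]; ring)
    obtain ⟨s1, hs1⟩ := (pow_dvd_pow (Polynomial.X:Polynomial ℤ) (show p+1 ≤ c+1 by omega)).trans hd1
    obtain ⟨s2, hs2⟩ := hd2
    refine ⟨s1*u2 + s2, ?_⟩
    rw [min_eq_left h]
    calc jgb (2*N) p * jeN N = (jgb (2*N) p * jeN p) * u2 := by rw [hu2]; ring
      _ = u1 * u2 := by rw [hcan]
      _ = 1 + Polynomial.X^(p+1) * (s1*u2+s2) := by
          have e1 : u1 = 1 + Polynomial.X^(p+1)*s1 := by linear_combination hs1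
          have e2 : u2 = 1 + Polynomial.X^(p+1)*s2 := by linear_combination hs2
          rw [e1, e2]; ring
  · obtain ⟨u1, hu1, hd1⟩ := jeN_factor (show p ≤ 2*N by omega)
    obtain ⟨u2, hu2, hd2⟩ := jeN_factor (show c ≤ N by omega)
    have hcan : jgb (2*N) p * jeN c = u1 :=
      mul_right_cancel₀ (jeN_ne_zero p)
        (by rw [show jgb (2*N) p * jeN c * jeN p = jgb (2*N) p * jeN p * jeN c by ring, hprod, hu1]; ring)
    obtain ⟨s1, hs1⟩ := (pow_dvd_pow (Polynomial.X:Polynomial ℤ) (show c+1 ≤ p+1 by omega)).trans hd1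
    obtain ⟨s2, hs2⟩ := hd2
    refine ⟨s1*u2 + s2, ?_⟩
    rw [min_eq_right h]
    calc jgb (2*N) p * jeN N = (jgb (2*N) p * jeN c) * u2 := by rw [hu2]; ring
      _ = u1 * u2 := by rw [hcan]
      _ = 1 + Polynomial.X^(c+1) * (s1*u2+s2) := by
          have e1 : u1 = 1 + Polynomial.X^(c+1)*s1 := by linear_combination hs1
          have e2 : u2 = 1 + Polynomial.X^(c+1)*s2 := by linear_combination hs2
          rw [e1, e2]; ring

lemma jgb_eN_coeff (N p c w : ℕ) (hpc : p + c = 2*N) (h1 : w ≤ p) (h2 : w ≤ c) :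
    (jgb (2*N) p * jeN N).coeff w = if w = 0 then 1 else 0 := by
  obtain ⟨s, hs⟩ := jgb_eN_one N p c hpc
  rw [hs, Polynomial.coeff_add, Polynomial.coeff_one]
  have hz : (Polynomial.X^(min p c + 1) * s).coeff w = 0 := by
    rw [mul_comm, Polynomial.coeff_mul_X_pow']
    simp only [if_neg (show ¬ (min p c + 1 ≤ w) by omega)]
  rw [hz, add_zero]

-- ------------------- two-variable layer -------------------

def q2 : MvPolynomial (Fin 2) ℤ := MvPolynomial.X 0 * MvPolynomial.X 1

def jEa (t : ℤ) : ℕ := (t*(t-1)/2).toNat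
def jEb (t : ℤ) : ℕ := (t*(t+1)/2).toNat

def jmono (t : ℤ) : MvPolynomial (Fin 2) ℤ :=
  MvPolynomial.X 0 ^ jEa t * MvPolynomial.X 1 ^ jEb t

def jgbZ (n : ℕ) (k : ℤ) : Polynomial ℤ := if 0 ≤ k then jgb n k.toNat else 0

lemma int_mul_pred_nonneg (t : ℤ) : 0 ≤ t * (t-1) := by
  rcases le_or_gt t 0 with h | h
  · exact mul_nonneg_iff.mpr (Or.inr ⟨h, by omega⟩)
  · exact mul_nonneg (by omega) (by omega)

lemma int_mul_pred_even (t : ℤ) : ∃ m, t * (t-1) = m + m := by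
  obtain ⟨m, hm⟩ := Int.even_mul_succ_self (t-1)
  exact ⟨m, by linear_combination hm⟩

lemma two_jEa (t : ℤ) : 2 * (jEa t : ℤ) = t * (t-1) := by
  have h1 := int_mul_pred_nonneg t
  obtain ⟨m, hm⟩ := int_mul_pred_even t
  unfold jEa
  omega

lemma two_jEb (t : ℤ) : 2 * (jEb t : ℤ) = t * (t+1) := by
  have h1 := int_mul_pred_nonneg (t+1)
  obtain ⟨m, hm⟩ := int_mul_pred_even (t+1)
  have e : (t+1) * (t+1-1) = t*(t+1) := by ring
  unfold jEb
  omega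

lemma jshift1 (N : ℕ) (t : ℤ) (h : 0 ≤ (N:ℤ) + t + 1) :
    MvPolynomial.X 0 * q2 ^ N * jmono (t+1)
      = Polynomial.aeval q2 ((Polynomial.X:Polynomial ℤ) ^ (((N:ℤ)+t+1).toNat)) * jmono t := by
  have k1 := two_jEa (t+1); have k2 := two_jEa t
  have k3 := two_jEb (t+1); have k4 := two_jEb t
  have r1 : (t+1)*(t+1-1) = t*(t-1) + 2*t := by ring
  have r2 : (t+1)*(t+1+1) = t*(t+1) + 2*(t+1) := by ring
  have hA : 1 + N + jEa (t+1) = ((N:ℤ)+t+1).toNat + jEa t := by omega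
  have hB : N + jEb (t+1) = ((N:ℤ)+t+1).toNat + jEb t := by omega
  calc MvPolynomial.X 0 * q2 ^ N * jmono (t+1)
      = MvPolynomial.X 0 ^ (1 + N + jEa (t+1)) * MvPolynomial.X 1 ^ (N + jEb (t+1)) := by
        simp only [jmono, q2, mul_pow]; ring
    _ = MvPolynomial.X 0 ^ (((N:ℤ)+t+1).toNat + jEa t) * MvPolynomial.X 1 ^ (((N:ℤ)+t+1).toNat + jEb t) := by
        rw [hA, hB]
    _ = Polynomial.aeval q2 ((Polynomial.X:Polynomial ℤ) ^ (((N:ℤ)+t+1).toNat)) * jmono t := by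
        rw [map_pow, Polynomial.aeval_X]
        simp only [jmono, q2, mul_pow]; ring

lemma jshift2 (N : ℕ) (t : ℤ) (h : 0 ≤ (N:ℤ) - t + 1) :
    MvPolynomial.X 1 * q2 ^ N * jmono (t-1)
      = Polynomial.aeval q2 ((Polynomial.X:Polynomial ℤ) ^ (((N:ℤ)-t+1).toNat)) * jmono t := by
  have k1 := two_jEa (t-1); have k2 := two_jEa t
  have k3 := two_jEb (t-1); have k4 := two_jEb t
  have r1 : (t-1)*(t-1-1) = t*(t-1) - 2*(t-1) := by ring
  have r2 : (t-1)*(t-1+1) = t*(t+1) - 2*t := by ring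
  have hA : N + jEa (t-1) = ((N:ℤ)-t+1).toNat + jEa t := by omega
  have hB : 1 + N + jEb (t-1) = ((N:ℤ)-t+1).toNat + jEb t := by omega
  calc MvPolynomial.X 1 * q2 ^ N * jmono (t-1)
      = MvPolynomial.X 0 ^ (N + jEa (t-1)) * MvPolynomial.X 1 ^ (1 + N + jEb (t-1)) := by
        simp only [jmono, q2, mul_pow]; ring
    _ = MvPolynomial.X 0 ^ (((N:ℤ)-t+1).toNat + jEa t) * MvPolynomial.X 1 ^ (((N:ℤ)-t+1).toNat + jEb t) := by
        rw [hA, hB]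
    _ = Polynomial.aeval q2 ((Polynomial.X:Polynomial ℤ) ^ (((N:ℤ)-t+1).toNat)) * jmono t := by
        rw [map_pow, Polynomial.aeval_X]
        simp only [jmono, q2, mul_pow]; ring

lemma jgbZ_neg {n : ℕ} {k : ℤ} (h : k < 0) : jgbZ n k = 0 := if_neg (by omega)

lemma jgbZ_of_nonneg {n : ℕ} {k : ℤ} (h : 0 ≤ k) : jgbZ n k = jgb n k.toNat := if_pos h

lemma jgbZ_eq_zero {n : ℕ} {k : ℤ} (h : (n:ℤ) < k) : jgbZ n k = 0 := by
  rw [jgbZ_of_nonneg (by omega), jgb_eq_zero n k.toNat (by omega)]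


lemma geom_step (M : ℕ) :
    (∑ i ∈ range (M+2), (Polynomial.X:Polynomial ℤ)^i)
      = 1 + Polynomial.X^(M+1) + Polynomial.X * ∑ i ∈ range M, (Polynomial.X:Polynomial ℤ)^i := by
  rw [Finset.sum_range_succ _ (M+1), Finset.sum_range_succ' _ M, Finset.mul_sum]
  simp only [pow_succ, pow_zero, mul_comm]
  ring

lemma jcomb (N : ℕ) (t : ℤ) (g : Polynomial ℤ) (h : 0 ≤ (N:ℤ)+t+1) :
    MvPolynomial.X 0 * q2^N * (Polynomial.aeval q2 g * jmono (t+1))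
      = Polynomial.aeval q2 (Polynomial.X^(((N:ℤ)+t+1).toNat) * g) * jmono t := by
  calc MvPolynomial.X 0 * q2^N * (Polynomial.aeval q2 g * jmono (t+1))
      = Polynomial.aeval q2 g * (MvPolynomial.X 0 * q2^N * jmono (t+1)) := by ring
    _ = Polynomial.aeval q2 g * (Polynomial.aeval q2 (Polynomial.X^(((N:ℤ)+t+1).toNat)) * jmono t) := by
        rw [jshift1 N t h]
    _ = Polynomial.aeval q2 (Polynomial.X^(((N:ℤ)+t+1).toNat) * g) * jmono t := by
        rw [map_mul]; ring

lemma jcomb2 (N : ℕ) (t : ℤ) (g : Polynomial ℤ) (h : 0 ≤ (N:ℤ)-t+1) :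
    MvPolynomial.X 1 * q2^N * (Polynomial.aeval q2 g * jmono (t-1))
      = Polynomial.aeval q2 (Polynomial.X^(((N:ℤ)-t+1).toNat) * g) * jmono t := by
  calc MvPolynomial.X 1 * q2^N * (Polynomial.aeval q2 g * jmono (t-1))
      = Polynomial.aeval q2 g * (MvPolynomial.X 1 * q2^N * jmono (t-1)) := by ring
    _ = Polynomial.aeval q2 g * (Polynomial.aeval q2 (Polynomial.X^(((N:ℤ)-t+1).toNat)) * jmono t) := by
        rw [jshift2 N t h]
    _ = Polynomial.aeval q2 (Polynomial.X^(((N:ℤ)-t+1).toNat) * g) * jmono t := by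
        rw [map_mul]; ring

lemma jreduce (N : ℕ) (t : ℤ) (g0 g1 g2 g3 : Polynomial ℤ) (e1 e2 : ℕ)
    (hid : g0 = g1 * (1 + Polynomial.X^(2*N+1)) + Polynomial.X^e1 * g2 + Polynomial.X^e2 * g3) :
    Polynomial.aeval q2 g0 * jmono t
      = Polynomial.aeval q2 g1 * jmono t * (1 + q2^(2*N+1))
        + Polynomial.aeval q2 (Polynomial.X^e1 * g2) * jmono t
        + Polynomial.aeval q2 (Polynomial.X^e2 * g3) * jmono t := by
  rw [hid]
  simp only [map_add, map_mul, map_pow, map_one, Polynomial.aeval_X]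
  ring

lemma EG (n : ℕ) (k : ℤ) (m : ℕ) (h : (m:ℤ) = k) : jgbZ n k = jgb n m := by
  rw [jgbZ_of_nonneg (by omega)]; congr 1; omega

lemma ZG (n : ℕ) (k : ℤ) (h : (n:ℤ) < k) : jgbZ n k = 0 := jgbZ_eq_zero h

lemma jkey (N : ℕ) (t : ℤ) :
    Polynomial.aeval q2 (jgbZ (2*N+2) ((N:ℤ)+1+t)) * jmono t
      = Polynomial.aeval q2 (jgbZ (2*N) ((N:ℤ)+t)) * jmono t * (1 + q2^(2*N+1))
        + MvPolynomial.X 0 * q2^N * (Polynomial.aeval q2 (jgbZ (2*N) ((N:ℤ)+t+1)) * jmono (t+1))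
        + MvPolynomial.X 1 * q2^N * (Polynomial.aeval q2 (jgbZ (2*N) ((N:ℤ)+t-1)) * jmono (t-1)) := by
  rcases lt_trichotomy t (-(N:ℤ)-1) with hc | hc | hc
  · -- t ≤ -N-2 : everything vanishes
    rw [jgbZ_neg (n := 2*N+2) (k := (N:ℤ)+1+t) (by omega),
        jgbZ_neg (n := 2*N) (k := (N:ℤ)+t) (by omega),
        jgbZ_neg (n := 2*N) (k := (N:ℤ)+t+1) (by omega),
        jgbZ_neg (n := 2*N) (k := (N:ℤ)+t-1) (by omega)]
    simp
  · -- t = -N-1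
    rw [EG (2*N+2) ((N:ℤ)+1+t) 0 (by omega),
        jgbZ_neg (n := 2*N) (k := (N:ℤ)+t) (by omega),
        EG (2*N) ((N:ℤ)+t+1) 0 (by omega),
        jgbZ_neg (n := 2*N) (k := (N:ℤ)+t-1) (by omega),
        jcomb N t (jgb (2*N) 0) (by omega)]
    rw [show (((N:ℤ)+t+1).toNat) = 0 from by omega]
    have hid : jgb (2*N+2) 0
        = 0 * (1 + Polynomial.X^(2*N+1)) + Polynomial.X^0 * jgb (2*N) 0
          + Polynomial.X^(2*N+2) * 0 := by simp
    have := jreduce N t (jgb (2*N+2) 0) 0 (jgb (2*N) 0) 0 0 (2*N+2) hid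
    rw [this]
    simp
  rcases lt_trichotomy t ((N:ℤ)+1) with hd | hd | hd
  · -- -N ≤ t ≤ N
    by_cases ht1 : t = -(N:ℤ)
    · -- t = -N
      rw [EG (2*N+2) ((N:ℤ)+1+t) 1 (by omega),
          EG (2*N) ((N:ℤ)+t) 0 (by omega),
          EG (2*N) ((N:ℤ)+t+1) 1 (by omega),
          jgbZ_neg (n := 2*N) (k := (N:ℤ)+t-1) (by omega),
          jcomb N t (jgb (2*N) 1) (by omega),
          jcomb2 N t 0 (by omega)]
      rw [show (((N:ℤ)+t+1).toNat) = 1 from by omega,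
          show (((N:ℤ)-t+1).toNat) = 2*N+1 from by omega]
      have hid : jgb (2*N+2) 1
          = jgb (2*N) 0 * (1 + Polynomial.X^(2*N+1)) + Polynomial.X^1 * jgb (2*N) 1
            + Polynomial.X^(2*N+1) * 0 := by
        rw [jgb_one, jgb_one, jgb_zero, geom_step (2*N)]
        ring
      rw [jreduce N t _ _ _ _ _ _ hid]
    by_cases ht2 : t = (N:ℤ)
    · -- t = N, N ≥ 1
      obtain ⟨M, rfl⟩ : ∃ M, N = M+1 := ⟨N-1, by omega⟩
      rw [EG (2*(M+1)+2) _ (2*M+3) (by omega),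
          EG (2*(M+1)) ((((M+1):ℕ):ℤ)+t) (2*M+2) (by omega),
          ZG (2*(M+1)) ((((M+1):ℕ):ℤ)+t+1) (by push_cast; omega),
          EG (2*(M+1)) ((((M+1):ℕ):ℤ)+t-1) (2*M+1) (by omega),
          jcomb (M+1) t 0 (by omega),
          jcomb2 (M+1) t (jgb (2*(M+1)) (2*M+1)) (by omega)]
      rw [show (((((M+1):ℕ)):ℤ)+t+1).toNat = 2*M+3 from by omega,
          show (((((M+1):ℕ)):ℤ)-t+1).toNat = 1 from by omega]
      have hid : jgb (2*(M+1)+2) (2*M+3)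
          = jgb (2*(M+1)) (2*M+2) * (1 + Polynomial.X^(2*(M+1)+1))
            + Polynomial.X^(2*M+3) * 0 + Polynomial.X^1 * jgb (2*(M+1)) (2*M+1) := by
        rw [show 2*(M+1)+2 = (2*M+3)+1 from by ring, show 2*(M+1)+1 = 2*M+3 from by ring,
            show 2*(M+1) = (2*M+1)+1 from by ring]
        rw [jgb_top (2*M+3), jgb_top (2*M+1), show (2*M+1)+1 = 2*M+2 from by ring, jgb_self]
        rw [show 2*M+3+1 = (2*M+2)+2 from by ring, geom_step (2*M+2),
            show 2*M+1+1 = 2*M+2 from by ring]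
        ring
      rw [jreduce (M+1) t _ _ _ _ _ _ hid]
    · -- main case : -N+1 ≤ t ≤ N-1
      obtain ⟨a, ha⟩ : ∃ a:ℕ, (a:ℤ) = (N:ℤ)+t-1 := ⟨((N:ℤ)+t-1).toNat, Int.toNat_of_nonneg (by omega)⟩
      obtain ⟨b, hb⟩ : ∃ b:ℕ, (b:ℤ) = (N:ℤ)-t-1 := ⟨((N:ℤ)-t-1).toNat, Int.toNat_of_nonneg (by omega)⟩
      rw [EG (2*N+2) ((N:ℤ)+1+t) (a+2) (by omega),
          EG (2*N) ((N:ℤ)+t) (a+1) (by omega),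
          EG (2*N) ((N:ℤ)+t+1) (a+2) (by omega),
          EG (2*N) ((N:ℤ)+t-1) a (by omega),
          jcomb N t (jgb (2*N) (a+2)) (by omega),
          jcomb2 N t (jgb (2*N) a) (by omega)]
      rw [show (((N:ℤ)+t+1).toNat) = a+2 from by omega,
          show (((N:ℤ)-t+1).toNat) = b+2 from by omega]
      have hid : jgb (2*N+2) (a+2)
          = jgb (2*N) (a+1) * (1 + Polynomial.X^(2*N+1))
            + Polynomial.X^(a+2) * jgb (2*N) (a+2) + Polynomial.X^(b+2) * jgb (2*N) a := by
        rw [show 2*N+2 = a+b+4 from by omega, show 2*N+1 = a+b+3 from by omega,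
            show 2*N = a+b+2 from by omega]
        exact jgb_step a b
      rw [jreduce N t _ _ _ _ _ _ hid]
  · -- t = N+1
    rw [EG (2*N+2) ((N:ℤ)+1+t) (2*N+2) (by omega),
        ZG (2*N) ((N:ℤ)+t) (by omega),
        ZG (2*N) ((N:ℤ)+t+1) (by omega),
        EG (2*N) ((N:ℤ)+t-1) (2*N) (by omega),
        jcomb2 N t (jgb (2*N) (2*N)) (by omega)]
    rw [show (((N:ℤ)-t+1).toNat) = 0 from by omega]
    have hid : jgb (2*N+2) (2*N+2)
        = 0 * (1 + Polynomial.X^(2*N+1)) + Polynomial.X^(2*N+3) * 0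
          + Polynomial.X^0 * jgb (2*N) (2*N) := by
      rw [jgb_self, jgb_self]; simp
    have := jreduce N t (jgb (2*N+2) (2*N+2)) 0 0 (jgb (2*N) (2*N)) (2*N+3) 0 hid
    rw [this]
    simp
  · -- t ≥ N+2 : everything vanishes
    rw [ZG (2*N+2) ((N:ℤ)+1+t) (by omega),
        ZG (2*N) ((N:ℤ)+t) (by omega),
        ZG (2*N) ((N:ℤ)+t+1) (by omega),
        ZG (2*N) ((N:ℤ)+t-1) (by omega)]
    simp


def jS (N : ℕ) : MvPolynomial (Fin 2) ℤ :=
  ∑ t ∈ Finset.Icc (-(N:ℤ)) (N:ℤ), Polynomial.aeval q2 (jgbZ (2*N) ((N:ℤ)+t)) * jmono t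

lemma jterm_zero (N : ℕ) {t : ℤ} (h : t < -(N:ℤ) ∨ (N:ℤ) < t) :
    Polynomial.aeval q2 (jgbZ (2*N) ((N:ℤ)+t)) * jmono t = 0 := by
  rcases h with h | h
  · rw [jgbZ_neg (by omega)]; simp
  · rw [ZG (2*N) _ (by omega)]; simp

lemma jS_eq (N : ℕ) {A B : ℤ} (hA : A ≤ -(N:ℤ)) (hB : (N:ℤ) ≤ B) :
    jS N = ∑ t ∈ Finset.Icc A B, Polynomial.aeval q2 (jgbZ (2*N) ((N:ℤ)+t)) * jmono t := by
  apply Finset.sum_subset (Finset.Icc_subset_Icc hA hB)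
  intro x _ hx
  rw [Finset.mem_Icc] at hx
  exact jterm_zero N (by omega)

set_option maxHeartbeats 1000000 in
lemma jS_succ (N : ℕ) :
    jS (N+1) = jS N * (1 + MvPolynomial.X 0 * q2^N + MvPolynomial.X 1 * q2^N + q2^(2*N+1)) := by
  have hL : jS (N+1) = ∑ t ∈ Finset.Icc (-(N:ℤ)-1) ((N:ℤ)+1),
      Polynomial.aeval q2 (jgbZ (2*N+2) ((N:ℤ)+1+t)) * jmono t := by
    unfold jS
    apply Finset.sum_congr
    · congr 1 <;> push_cast <;> ring
    · intro t _
      have e : jgbZ (2*(N+1)) ((((N+1:ℕ)):ℤ)+t) = jgbZ (2*N+2) ((N:ℤ)+1+t) := by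
        have g1 : 2*(N+1) = 2*N+2 := by ring
        have g2 : (((N+1:ℕ)):ℤ)+t = (N:ℤ)+1+t := by push_cast; ring
        rw [g1, g2]
      rw [e]
  rw [hL, Finset.sum_congr rfl (fun t _ => jkey N t), Finset.sum_add_distrib,
    Finset.sum_add_distrib]
  have h1 : ∑ t ∈ Finset.Icc (-(N:ℤ)-1) ((N:ℤ)+1),
      Polynomial.aeval q2 (jgbZ (2*N) ((N:ℤ)+t)) * jmono t * (1 + q2^(2*N+1))
      = jS N * (1 + q2^(2*N+1)) := by
    rw [← Finset.sum_mul, ← jS_eq N (by omega) (by omega)]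
  have h2 : ∑ t ∈ Finset.Icc (-(N:ℤ)-1) ((N:ℤ)+1),
      MvPolynomial.X 0 * q2^N * (Polynomial.aeval q2 (jgbZ (2*N) ((N:ℤ)+t+1)) * jmono (t+1))
      = MvPolynomial.X 0 * q2^N * jS N := by
    rw [← Finset.mul_sum]
    congr 1
    have hmap := Finset.sum_map (Finset.Icc (-(N:ℤ)-1) ((N:ℤ)+1)) (addRightEmbedding (1:ℤ))
      (fun s => Polynomial.aeval q2 (jgbZ (2*N) ((N:ℤ)+s)) * jmono s)
    rw [Finset.map_add_right_Icc] at hmap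
    calc ∑ t ∈ Finset.Icc (-(N:ℤ)-1) ((N:ℤ)+1),
          Polynomial.aeval q2 (jgbZ (2*N) ((N:ℤ)+t+1)) * jmono (t+1)
        = ∑ t ∈ Finset.Icc (-(N:ℤ)-1) ((N:ℤ)+1),
          Polynomial.aeval q2 (jgbZ (2*N) ((N:ℤ)+(t+1))) * jmono (t+1) := by
          refine Finset.sum_congr rfl (fun t _ => by rw [add_assoc])
      _ = ∑ s ∈ Finset.Icc (-(N:ℤ)-1+1) ((N:ℤ)+1+1),
          Polynomial.aeval q2 (jgbZ (2*N) ((N:ℤ)+s)) * jmono s := by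
          rw [hmap]; rfl
      _ = jS N := (jS_eq N (by omega) (by omega)).symm
  have h3 : ∑ t ∈ Finset.Icc (-(N:ℤ)-1) ((N:ℤ)+1),
      MvPolynomial.X 1 * q2^N * (Polynomial.aeval q2 (jgbZ (2*N) ((N:ℤ)+t-1)) * jmono (t-1))
      = MvPolynomial.X 1 * q2^N * jS N := by
    rw [← Finset.mul_sum]
    congr 1
    have hmap := Finset.sum_map (Finset.Icc (-(N:ℤ)-1) ((N:ℤ)+1)) (addRightEmbedding (-1:ℤ))
      (fun s => Polynomial.aeval q2 (jgbZ (2*N) ((N:ℤ)+s)) * jmono s)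
    rw [Finset.map_add_right_Icc] at hmap
    calc ∑ t ∈ Finset.Icc (-(N:ℤ)-1) ((N:ℤ)+1),
          Polynomial.aeval q2 (jgbZ (2*N) ((N:ℤ)+t-1)) * jmono (t-1)
        = ∑ t ∈ Finset.Icc (-(N:ℤ)-1) ((N:ℤ)+1),
          Polynomial.aeval q2 (jgbZ (2*N) ((N:ℤ)+(t+(-1)))) * jmono (t+(-1)) := by
          refine Finset.sum_congr rfl (fun t _ => by simp only [sub_eq_add_neg, add_assoc])
      _ = ∑ s ∈ Finset.Icc (-(N:ℤ)-1+(-1)) ((N:ℤ)+1+(-1)),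
          Polynomial.aeval q2 (jgbZ (2*N) ((N:ℤ)+s)) * jmono s := by
          rw [hmap]; rfl
      _ = jS N := (jS_eq N (by omega) (by omega)).symm
  rw [h1, h2, h3]; ring

def jF (N : ℕ) : MvPolynomial (Fin 2) ℤ :=
  ∏ n ∈ range N, ((1 + MvPolynomial.X 0 * q2 ^ n) * (1 + MvPolynomial.X 1 * q2 ^ n))

lemma jF_eq_jS (N : ℕ) : jF N = jS N := by
  induction N with
  | zero =>
    have : jS 0 = 1 := by
      unfold jS
      norm_num
      rw [show jgbZ 0 0 = jgb 0 0 from EG 0 0 0 (by omega)]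
      simp [jgb, jmono, jEa, jEb]
    rw [this]
    simp [jF]
  | succ N ih =>
    rw [jS_succ, ← ih]
    unfold jF
    rw [Finset.prod_range_succ]
    congr 1
    simp only [q2]
    ring


lemma jcoeff_aeval_mono (p : Polynomial ℤ) (A B : ℕ) (d : Fin 2 →₀ ℕ) :
    MvPolynomial.coeff d (Polynomial.aeval q2 p * (MvPolynomial.X 0 ^ A * MvPolynomial.X 1 ^ B))
      = if A ≤ d 0 ∧ B ≤ d 1 ∧ d 0 - A = d 1 - B then p.coeff (d 0 - A) else 0 := by
  conv_lhs => rw [p.as_sum_support]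
  rw [map_sum, Finset.sum_mul, MvPolynomial.coeff_sum]
  have hterm : ∀ n ∈ p.support,
      MvPolynomial.coeff d (Polynomial.aeval q2 (Polynomial.monomial n (p.coeff n))
          * (MvPolynomial.X 0 ^ A * MvPolynomial.X 1 ^ B))
        = if d 0 = n + A ∧ d 1 = n + B then p.coeff n else 0 := by
    intro n _
    rw [Polynomial.aeval_monomial, MvPolynomial.algebraMap_eq]
    simp only [q2, mul_pow, MvPolynomial.X_pow_eq_monomial, MvPolynomial.C_apply,
      MvPolynomial.monomial_mul, MvPolynomial.coeff_monomial, one_mul, mul_one]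
    by_cases hd : d 0 = n + A ∧ d 1 = n + B
    · rw [if_pos hd, if_pos]
      ext x
      fin_cases x <;> simp [Finsupp.single_apply, hd.1, hd.2]
    · rw [if_neg hd, if_neg]
      intro h
      apply hd
      constructor <;> rw [← h] <;> simp [Finsupp.single_apply]
  rw [Finset.sum_congr rfl hterm]
  by_cases hC : A ≤ d 0 ∧ B ≤ d 1 ∧ d 0 - A = d 1 - B
  · rw [if_pos hC]
    obtain ⟨hA, hB, hAB⟩ := hC
    have hrw : ∀ n ∈ p.support, (if d 0 = n + A ∧ d 1 = n + B then p.coeff n else 0)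
        = if n = d 0 - A then p.coeff n else 0 := by
      intro n _
      exact if_congr (by omega) rfl rfl
    rw [Finset.sum_congr rfl hrw, Finset.sum_ite_eq' p.support (d 0 - A) (fun n => p.coeff n)]
    by_cases hs : d 0 - A ∈ p.support
    · rw [if_pos hs]
    · rw [if_neg hs, Polynomial.notMem_support_iff.mp hs]
  · rw [if_neg hC]
    apply Finset.sum_eq_zero
    intro n _
    rw [if_neg (by omega)]

def jG (N : ℕ) : MvPolynomial (Fin 2) ℤ :=
  ∏ n ∈ range N,
    ((1 + MvPolynomial.X 0 * q2 ^ n) * (1 + MvPolynomial.X 1 * q2 ^ n) * (1 - q2 ^ (n+1)))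

lemma jG_coe (N : ℕ) :
    (MvPolynomial.coeToMvPowerSeries.ringHom (jG N) : MvPowerSeries (Fin 2) ℤ)
      = ∏ n ∈ range N,
        ((1 + (MvPowerSeries.X 0 : MvPowerSeries (Fin 2) ℤ)
            * (MvPowerSeries.X 0 * MvPowerSeries.X 1) ^ n)
          * (1 + (MvPowerSeries.X 1 : MvPowerSeries (Fin 2) ℤ)
            * (MvPowerSeries.X 0 * MvPowerSeries.X 1) ^ n)
          * (1 - ((MvPowerSeries.X 0 : MvPowerSeries (Fin 2) ℤ)
            * MvPowerSeries.X 1) ^ (n + 1))) := by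
  unfold jG
  rw [map_prod]
  apply Finset.prod_congr rfl
  intro n _
  simp only [q2, map_mul, map_add, map_sub, map_one, map_pow,
    MvPolynomial.coeToMvPowerSeries.ringHom_apply, MvPolynomial.coe_X]

lemma jG_eq (N : ℕ) : jG N = jF N * Polynomial.aeval q2 (jeN N) := by
  have he : Polynomial.aeval q2 (jeN N) = ∏ n ∈ range N, (1 - q2^(n+1)) := by
    unfold jeN
    rw [map_prod]
    apply Finset.prod_congr rfl
    intro n _
    simp only [map_sub, map_one, map_pow, Polynomial.aeval_X]
  rw [he]
  unfold jG jF
  rw [← Finset.prod_mul_distrib]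

lemma jG_sum (N : ℕ) : jG N = ∑ t ∈ Finset.Icc (-(N:ℤ)) (N:ℤ),
    Polynomial.aeval q2 (jgbZ (2*N) ((N:ℤ)+t) * jeN N) * jmono t := by
  rw [jG_eq, jF_eq_jS]
  unfold jS
  rw [Finset.sum_mul]
  apply Finset.sum_congr rfl
  intro t _
  rw [map_mul]
  ring

/-- Jacobi's triple product identity for `f(a,b) = ∑_{n∈ℤ} a^{n(n+1)/2} b^{n(n-1)/2}`:
`f(a,b) = (-a;ab)_∞ (-b;ab)_∞ (ab;ab)_∞`, stated coefficient-wise: factors with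
index beyond the total degree do not affect the coefficient. The coefficient of
`a^i b^j` in `f(a,b)` is `1` iff `i - j = n` with `n(n+1)/2 = i` (hence
`n(n-1)/2 = j`), and `0` otherwise. -/
theorem jacobi_triple_product :
    ∀ d : Fin 2 →₀ ℕ,
      MvPowerSeries.coeff d
        (∏ n ∈ Finset.range (d 0 + d 1 + 1),
          ((1 + (MvPowerSeries.X 0 : MvPowerSeries (Fin 2) ℤ)
              * (MvPowerSeries.X 0 * MvPowerSeries.X 1) ^ n)
            * (1 + (MvPowerSeries.X 1 : MvPowerSeries (Fin 2) ℤ)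
              * (MvPowerSeries.X 0 * MvPowerSeries.X 1) ^ n)
            * (1 - ((MvPowerSeries.X 0 : MvPowerSeries (Fin 2) ℤ)
              * MvPowerSeries.X 1) ^ (n + 1))))
      = if ((d 0 : ℤ) - (d 1 : ℤ)) * ((d 0 : ℤ) - (d 1 : ℤ) + 1) = 2 * (d 0 : ℤ)
        then 1 else 0 := by
  intro d
  set N := d 0 + d 1 + 1 with hN
  rw [← jG_coe N, MvPolynomial.coeToMvPowerSeries.ringHom_apply, MvPolynomial.coeff_coe,
    jG_sum, MvPolynomial.coeff_sum]
  have hterm : ∀ t ∈ Finset.Icc (-(N:ℤ)) (N:ℤ),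
      MvPolynomial.coeff d (Polynomial.aeval q2 (jgbZ (2*N) ((N:ℤ)+t) * jeN N) * jmono t)
        = if jEa t ≤ d 0 ∧ jEb t ≤ d 1 ∧ d 0 - jEa t = d 1 - jEb t
          then (jgbZ (2*N) ((N:ℤ)+t) * jeN N).coeff (d 0 - jEa t) else 0 := by
    intro t _
    rw [show jmono t = MvPolynomial.X 0 ^ jEa t * MvPolynomial.X 1 ^ jEb t from rfl]
    exact jcoeff_aeval_mono _ _ _ d
  rw [Finset.sum_congr rfl hterm]
  set t0 : ℤ := (d 1 : ℤ) - (d 0 : ℤ) with ht0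
  have hmem : t0 ∈ Finset.Icc (-(N:ℤ)) (N:ℤ) := by
    rw [Finset.mem_Icc]; omega
  have hvan : ∀ t ∈ Finset.Icc (-(N:ℤ)) (N:ℤ), t ≠ t0 →
      (if jEa t ≤ d 0 ∧ jEb t ≤ d 1 ∧ d 0 - jEa t = d 1 - jEb t
        then (jgbZ (2*N) ((N:ℤ)+t) * jeN N).coeff (d 0 - jEa t) else 0) = 0 := by
    intro t _ hne
    have hBA : 2*((jEb t:ℕ):ℤ) = 2*((jEa t:ℕ):ℤ) + 2*t := by
      linear_combination two_jEb t - two_jEa t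
    rw [if_neg (by rintro ⟨h1, h2, h3⟩; omega)]
  rw [Finset.sum_eq_single_of_mem t0 hmem hvan]
  have eA : 2*((jEa t0 : ℕ):ℤ) = ((d 0:ℤ) - (d 1:ℤ))*((d 0:ℤ) - (d 1:ℤ)+1) := by
    rw [two_jEa, ht0]; ring
  have eB : 2*((jEb t0:ℕ):ℤ) = 2*((jEa t0:ℕ):ℤ) + 2*t0 := by
    linear_combination two_jEb t0 - two_jEa t0
  by_cases hcond : jEa t0 ≤ d 0 ∧ jEb t0 ≤ d 1 ∧ d 0 - jEa t0 = d 1 - jEb t0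
  · rw [if_pos hcond]
    rw [EG (2*N) ((N:ℤ)+t0) (2*(d 1)+1) (by omega)]
    rw [jgb_eN_coeff N (2*(d 1)+1) (2*(d 0)+1) _ (by omega) (by omega) (by omega)]
    rw [← eA]
    by_cases hfin : d 0 - jEa t0 = 0
    · rw [if_pos hfin, if_pos (by omega)]
    · rw [if_neg hfin, if_neg (by omega)]
  · rw [if_neg hcond, ← eA, if_neg (by omega)]

end JTP
end
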